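/- The 0-query complexity of TRIBES_n (the AND of n disjoint ORs of n variables each) is exactly n² − n + 1: every decision tree computing TRIBES_n has some root-to-leaf path along which at least n² − n + 1 queries are answered 0, and there is a decision tree computing TRIBES_n whose every root-to-leaf path has at most n² − n + 1 queries answered 0. -/

import Mathlib

section Defs
variable {I : Type*} [Fintype I] [DecidableEq I]

/-- Flip a single bit of the input. -/
def flipOne (i : I) (x : I → Bool) : I → Bool := Function.update x i (!x i)

/-- Flip all bits in the block `B`. -/
def flipSet (B : Finset I) (x : I → Bool) : I → Bool := fun j => if j ∈ B then !x j else x j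

/-- Sensitivity of `f` at `x`: the number of coordinates whose flip changes the value. -/
def sensAt (f : (I → Bool) → Bool) (x : I → Bool) : ℕ :=
  (Finset.univ.filter fun i => f (flipOne i x) ≠ f x).card

/-- Sensitivity of `f`. -/
noncomputable def sensF (f : (I → Bool) → Bool) : ℕ := sSup (Set.range (sensAt f))

/-- There exist `m` pairwise disjoint sensitive blocks for `f` at `x`. -/
def SensBlocks (f : (I → Bool) → Bool) (x : I → Bool) (m : ℕ) : Prop :=
  ∃ B : Fin m → Finset I, (∀ a b, a ≠ b → Disjoint (B a) (B b)) ∧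
    ∀ a, f (flipSet (B a) x) ≠ f x

/-- Block sensitivity of `f`. -/
noncomputable def bsF (f : (I → Bool) → Bool) : ℕ := sSup {m | ∃ x, SensBlocks f x m}

/-- `S` is a certificate for `f` at `x`. -/
def IsCert (f : (I → Bool) → Bool) (x : I → Bool) (S : Finset I) : Prop :=
  ∀ y, (∀ i ∈ S, y i = x i) → f y = f x

/-- Certificate complexity of `f` at `x`. -/
noncomputable def certAt (f : (I → Bool) → Bool) (x : I → Bool) : ℕ :=
  sInf {m | ∃ S : Finset I, IsCert f x S ∧ S.card = m}

/-- Certificate complexity of `f`. -/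
noncomputable def certF (f : (I → Bool) → Bool) : ℕ := sSup (Set.range (certAt f))

/-- Restrict `f` by the partial assignment `ρ`; the result is a function on the
free variables (those with `ρ i = none`). -/
def restrictTo (ρ : I → Option Bool) (f : (I → Bool) → Bool) :
    ({i : I // ρ i = none} → Bool) → Bool :=
  fun y => f fun i => if h : ρ i = none then y ⟨i, h⟩ else (ρ i).getD false

end Defs

/-- The base Rubinstein-type function on `k²` variables: value `1` iff exactly one aligned
contiguous block of `k` variables is all-`1` and all other variables are `0`. -/
def rub (k : ℕ) (x : Fin (k ^ 2) → Bool) : Bool :=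
  decide (∃ j : Fin k, ∀ i : Fin (k ^ 2),
    (x i = true ↔ (j.val * k ≤ i.val ∧ i.val < j.val * k + k)))

/-- The OR of `k²` disjoint copies of the base Rubinstein-type function. -/
def bigRub (k : ℕ) (x : Fin (k ^ 2) × Fin (k ^ 2) → Bool) : Bool :=
  decide (∃ c : Fin (k ^ 2), rub k (fun t => x (c, t)) = true)

/-- Deterministic single-bit decision trees. -/
inductive DTree (I : Type*) : Type _
  | leaf : Bool → DTree I
  | node : I → DTree I → DTree I → DTree I

namespace DTree
variable {I : Type*}

def eval : DTree I → (I → Bool) → Bool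
  | leaf b, _ => b
  | node i t0 t1, x => bif x i then t1.eval x else t0.eval x

def depth : DTree I → ℕ
  | leaf _ => 0
  | node _ t0 t1 => max t0.depth t1.depth + 1

/-- Maximum number of queries answered `0` on a root-to-leaf path. -/
def zeroDepth : DTree I → ℕ
  | leaf _ => 0
  | node _ t0 t1 => max (t0.zeroDepth + 1) t1.zeroDepth

end DTree

/-- AND-decision trees: each node queries the conjunction of a subset of variables. -/
inductive ADTree (I : Type*) : Type _
  | leaf : Bool → ADTree I
  | node : Finset I → ADTree I → ADTree I → ADTree I

namespace ADTree
variable {I : Type*}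

def eval : ADTree I → (I → Bool) → Bool
  | leaf b, _ => b
  | node S t0 t1, x => if ∀ i ∈ S, x i = true then t1.eval x else t0.eval x

def depth : ADTree I → ℕ
  | leaf _ => 0
  | node _ t0 t1 => max t0.depth t1.depth + 1

end ADTree

/-- The 0-query complexity: smallest 0-depth of a decision tree computing `f`. -/
noncomputable def zeroQuery {I : Type*} (f : (I → Bool) → Bool) : ℕ :=
  sInf {d | ∃ T : DTree I, (∀ x, T.eval x = f x) ∧ T.zeroDepth = d}

/-- The AND-query complexity: smallest depth of an AND-decision tree computing `f`. -/
noncomputable def andQuery {I : Type*} (f : (I → Bool) → Bool) : ℕ :=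
  sInf {d | ∃ T : ADTree I, (∀ x, T.eval x = f x) ∧ T.depth = d}

/-- `TRIBES_n`: the AND of `n` disjoint ORs of `n` variables each. -/
def tribes (n : ℕ) (x : Fin n × Fin n → Bool) : Bool :=
  decide (∀ i : Fin n, ∃ j : Fin n, x (i, j) = true)

namespace Stmt13Aux

/-! ### Adversary lower bound machinery -/

abbrev St (n : ℕ) := Fin n × Fin n → Option Bool

variable {n : ℕ}

/-- Adversary answer: stored value if assigned; otherwise `true` iff all other
variables of the row are already `false` and some other row still has no `true`. -/
def ans (σ : St n) (p : Fin n × Fin n) : Bool :=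
  match σ p with
  | some b => b
  | none => decide ((∀ j, j ≠ p.2 → σ (p.1, j) = some false) ∧
      ∃ i, i ≠ p.1 ∧ ∀ j, σ (i, j) ≠ some true)

def run : DTree (Fin n × Fin n) → St n → St n × Bool
  | .leaf b, σ => (σ, b)
  | .node p t0 t1, σ =>
      bif ans σ p then run t1 (Function.update σ p (some (ans σ p)))
      else run t0 (Function.update σ p (some (ans σ p)))

lemma run_mono (T : DTree (Fin n × Fin n)) (σ : St n) (p : Fin n × Fin n) (b : Bool)
    (h : σ p = some b) : (run T σ).1 p = some b := by
  induction T generalizing σ with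
  | leaf c => exact h
  | node q t0 t1 ih0 ih1 =>
    have h' : Function.update σ q (some (ans σ q)) p = some b := by
      rcases eq_or_ne p q with rfl | hq
      · simp [ans, h]
      · simpa [Function.update_of_ne hq] using h
    simp only [run]
    cases hq : ans σ q with
    | false => rw [hq] at h'; simpa using ih0 _ h'
    | true => rw [hq] at h'; simpa using ih1 _ h'

lemma eval_run (T : DTree (Fin n × Fin n)) (σ : St n) (x : Fin n × Fin n → Bool)
    (hx : ∀ p b, (run T σ).1 p = some b → x p = b) :
    T.eval x = (run T σ).2 := by
  induction T generalizing σ with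
  | leaf b => rfl
  | node q t0 t1 ih0 ih1 =>
    have hupd : Function.update σ q (some (ans σ q)) q = some (ans σ q) := by simp
    have hq : (run (.node q t0 t1) σ).1 q = some (ans σ q) := by
      simp only [run]
      cases hq' : ans σ q with
      | false => rw [hq'] at hupd; simpa using run_mono t0 _ q _ hupd
      | true => rw [hq'] at hupd; simpa using run_mono t1 _ q _ hupd
    have hxq : x q = ans σ q := hx q _ hq
    simp only [DTree.eval, hxq, run]
    cases h : ans σ q with
    | false =>
      simp only [cond_false]
      exact ih0 _ (by intro p b hp; exact hx p b (by simp only [run, h, cond_false]; exact hp))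
    | true =>
      simp only [cond_true]
      exact ih1 _ (by intro p b hp; exact hx p b (by simp only [run, h, cond_true]; exact hp))

/-- Number of variables set to `false`. -/
def Z (σ : St n) : ℕ := (Finset.univ.filter fun p : Fin n × Fin n => σ p = some false).card

lemma Z_update_true (σ : St n) (p : Fin n × Fin n) :
    Z (Function.update σ p (some true)) ≤ Z σ := by
  apply Finset.card_le_card
  intro q hq
  simp only [Finset.mem_filter, Finset.mem_univ, true_and] at hq ⊢
  rcases eq_or_ne q p with rfl | hne
  · simp at hq
  · simpa [Function.update_of_ne hne] using hq

lemma Z_update_false (σ : St n) (p : Fin n × Fin n) :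
    Z (Function.update σ p (some false)) ≤ Z σ + 1 := by
  have hsub : (Finset.univ.filter fun q : Fin n × Fin n =>
      Function.update σ p (some false) q = some false) ⊆
      insert p (Finset.univ.filter fun q => σ q = some false) := by
    intro q hq
    simp only [Finset.mem_filter, Finset.mem_univ, true_and] at hq
    rcases eq_or_ne q p with rfl | hne
    · exact Finset.mem_insert_self _ _
    · exact Finset.mem_insert_of_mem (by
        simp only [Finset.mem_filter, Finset.mem_univ, true_and]
        simpa [Function.update_of_ne hne] using hq)
  calc Z (Function.update σ p (some false)) ≤ _ := Finset.card_le_card hsub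
    _ ≤ Z σ + 1 := Finset.card_insert_le _ _

lemma Z_run (T : DTree (Fin n × Fin n)) (σ : St n) :
    Z (run T σ).1 ≤ T.zeroDepth + Z σ := by
  induction T generalizing σ with
  | leaf b => simp [run, DTree.zeroDepth]
  | node q t0 t1 ih0 ih1 =>
    simp only [run, DTree.zeroDepth]
    cases h : ans σ q with
    | false =>
      simp only [cond_false]
      calc Z (run t0 (Function.update σ q (some false))).1
          ≤ t0.zeroDepth + Z (Function.update σ q (some false)) := ih0 _
        _ ≤ t0.zeroDepth + (Z σ + 1) := by
            exact Nat.add_le_add_left (Z_update_false σ q) _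
        _ ≤ max (t0.zeroDepth + 1) t1.zeroDepth + Z σ := by
            have := le_max_left (t0.zeroDepth + 1) t1.zeroDepth; omega
    | true =>
      simp only [cond_true]
      calc Z (run t1 (Function.update σ q (some true))).1
          ≤ t1.zeroDepth + Z (Function.update σ q (some true)) := ih1 _
        _ ≤ t1.zeroDepth + Z σ := Nat.add_le_add_left (Z_update_true σ q) _
        _ ≤ max (t0.zeroDepth + 1) t1.zeroDepth + Z σ := by
            have := le_max_right (t0.zeroDepth + 1) t1.zeroDepth; omega

/-- The adversary invariant. -/
structure Inv (σ : St n) : Prop where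
  rowTrue : ∀ i j, σ (i, j) = some true → ∀ j', j' ≠ j → σ (i, j') = some false
  exRow : ∃ i, ∀ j, σ (i, j) ≠ some true
  deadRow : ∀ i, (∀ j, σ (i, j) = some false) → ∀ i', i' ≠ i → ∃ j, σ (i', j) = some true

lemma inv_step (σ : St n) (p : Fin n × Fin n) (h : Inv σ) :
    Inv (Function.update σ p (some (ans σ p))) := by
  obtain ⟨p1, p2⟩ := p
  rcases hσp : σ (p1, p2) with _ | b
  case some =>
    have ha : ans σ (p1, p2) = b := by simp [ans, hσp]
    rw [ha, ← hσp, Function.update_eq_self]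
    exact h
  case none =>
  cases ha : ans σ (p1, p2) with
  | true =>
    have hAE : (∀ j, j ≠ p2 → σ (p1, j) = some false) ∧
        ∃ i, i ≠ p1 ∧ ∀ j, σ (i, j) ≠ some true := by
      have := ha
      simp only [ans, hσp, decide_eq_true_eq] at this
      exact this
    set σ' := Function.update σ (p1, p2) (some true) with hσ'def
    have hupd : ∀ q : Fin n × Fin n, q ≠ (p1, p2) → σ' q = σ q := by
      intro q hq; simp [hσ'def, Function.update_of_ne hq]
    have hupdp : σ' (p1, p2) = some true := by simp [hσ'def]
    constructor
    · intro i j htrue j' hj'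
      by_cases hij : (i, j) = (p1, p2)
      · have h1 : i = p1 := congrArg Prod.fst hij
        have h2 : j = p2 := congrArg Prod.snd hij
        subst h1; subst h2
        have hne : (i, j') ≠ (i, j) := by simp [hj']
        rw [hupd _ hne]
        exact hAE.1 j' hj'
      · have hσij : σ (i, j) = some true := by rw [← hupd _ hij]; exact htrue
        by_cases hij' : (i, j') = (p1, p2)
        · exfalso
          have h1 : i = p1 := congrArg Prod.fst hij'
          have h2 : j' = p2 := congrArg Prod.snd hij'
          subst h1; subst h2
          have hjne : j ≠ j' := fun hjj => hij (by rw [hjj])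
          have := hAE.1 j hjne
          rw [this] at hσij; simp at hσij
        · rw [hupd _ hij']
          exact h.rowTrue i j hσij j' hj'
    · obtain ⟨i0, hi0, hno⟩ := hAE.2
      refine ⟨i0, fun j => ?_⟩
      have : (i0, j) ≠ (p1, p2) := by simp [hi0]
      rw [hupd _ this]; exact hno j
    · intro i hall i' hi'
      have hip : i ≠ p1 := by
        intro hh; subst hh
        have := hall p2; rw [hupdp] at this; simp at this
      have hallσ : ∀ j, σ (i, j) = some false := by
        intro j
        have : (i, j) ≠ (p1, p2) := by simp [hip]
        rw [← hupd _ this]; exact hall j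
      obtain ⟨j, hj⟩ := h.deadRow i hallσ i' hi'
      refine ⟨j, ?_⟩
      have : (i', j) ≠ (p1, p2) := by
        intro hh
        have h1 : i' = p1 := congrArg Prod.fst hh
        have h2 : j = p2 := congrArg Prod.snd hh
        subst h1; subst h2
        rw [hσp] at hj; simp at hj
      rw [hupd _ this]; exact hj
  | false =>
    have hAE : ¬ ((∀ j, j ≠ p2 → σ (p1, j) = some false) ∧
        ∃ i, i ≠ p1 ∧ ∀ j, σ (i, j) ≠ some true) := by
      have := ha
      simp only [ans, hσp, decide_eq_false_iff_not] at this
      exact this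
    set σ' := Function.update σ (p1, p2) (some false) with hσ'def
    have hupd : ∀ q : Fin n × Fin n, q ≠ (p1, p2) → σ' q = σ q := by
      intro q hq; simp [hσ'def, Function.update_of_ne hq]
    have hupdp : σ' (p1, p2) = some false := by simp [hσ'def]
    have hfalse : ∀ q, σ q = some false → σ' q = some false := by
      intro q hq
      rcases eq_or_ne q (p1, p2) with rfl | hne
      · exact hupdp
      · rw [hupd _ hne]; exact hq
    constructor
    · intro i j htrue j' hj'
      have hij : (i, j) ≠ (p1, p2) := by
        intro hh; rw [hh, hupdp] at htrue; simp at htrue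
      have hσij : σ (i, j) = some true := by rw [← hupd _ hij]; exact htrue
      exact hfalse _ (h.rowTrue i j hσij j' hj')
    · obtain ⟨i0, hno⟩ := h.exRow
      refine ⟨i0, fun j => ?_⟩
      rcases eq_or_ne ((i0, j) : Fin n × Fin n) (p1, p2) with heq | hne
      · rw [heq, hupdp]; simp
      · rw [hupd _ hne]; exact hno j
    · intro i hall i' hi'
      by_cases hip : i = p1
      · subst hip
        have hA : ∀ j, j ≠ p2 → σ (i, j) = some false := by
          intro j hj
          have : (i, j) ≠ (i, p2) := by simp [hj]
          rw [← hupd _ this]; exact hall j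
        have hnE : ¬ ∃ i'', i'' ≠ i ∧ ∀ j, σ (i'', j) ≠ some true := fun hE => hAE ⟨hA, hE⟩
        push_neg at hnE
        obtain ⟨j, hj⟩ := hnE i' hi'
        refine ⟨j, ?_⟩
        have : (i', j) ≠ (i, p2) := by simp [hi']
        rw [hupd _ this]; exact hj
      · have hallσ : ∀ j, σ (i, j) = some false := by
          intro j
          have : (i, j) ≠ (p1, p2) := by simp [hip]
          rw [← hupd _ this]; exact hall j
        obtain ⟨j, hj⟩ := h.deadRow i hallσ i' hi'
        refine ⟨j, ?_⟩
        have : (i', j) ≠ (p1, p2) := by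
          intro hh
          have h1 : i' = p1 := congrArg Prod.fst hh
          have h2 : j = p2 := congrArg Prod.snd hh
          subst h1; subst h2
          rw [hσp] at hj; simp at hj
        rw [hupd _ this]; exact hj

lemma inv_run (T : DTree (Fin n × Fin n)) (σ : St n) (h : Inv σ) : Inv (run T σ).1 := by
  induction T generalizing σ with
  | leaf b => exact h
  | node q t0 t1 ih0 ih1 =>
    simp only [run]
    have hstep := inv_step σ q h
    cases hq : ans σ q with
    | false => rw [hq] at hstep; simpa using ih0 _ hstep
    | true => rw [hq] at hstep; simpa using ih1 _ hstep

lemma Z_lb (hn : 1 ≤ n) (σ : St n) (i : Fin n) (hdead : ∀ j, σ (i, j) = some false)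
    (hrows : ∀ i', i' ≠ i → ∃ j, ∀ j', j' ≠ j → σ (i', j') = some false) :
    n ^ 2 - n + 1 ≤ Z σ := by
  classical
  have hfib : Z σ = ∑ i' : Fin n,
      ((Finset.univ.filter fun p : Fin n × Fin n => σ p = some false).filter
        fun p => p.1 = i').card :=
    Finset.card_eq_sum_card_fiberwise (fun x _ => Finset.mem_univ _)
  have hbound : ∀ i' : Fin n, (n - 1) + (if i' = i then 1 else 0) ≤
      ((Finset.univ.filter fun p : Fin n × Fin n => σ p = some false).filter
        fun p => p.1 = i').card := by
    intro i'
    by_cases hii : i' = i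
    · subst hii
      rw [if_pos rfl]
      have hle : (Finset.univ : Finset (Fin n)).card ≤
          ((Finset.univ.filter fun p : Fin n × Fin n => σ p = some false).filter
            fun p => p.1 = i').card :=
        Finset.card_le_card_of_injOn (fun j => (i', j))
          (by intro j _
              show (i', j) ∈ _
              simp only [Finset.mem_coe, Finset.mem_filter, Finset.mem_univ, true_and]
              exact ⟨hdead j, trivial⟩)
          (by intro a _ b _ hab; simpa using hab)
      have hcard : (Finset.univ : Finset (Fin n)).card = n := by simp
      omega
    · obtain ⟨j0, hj0⟩ := hrows i' hii
      simp only [if_neg hii]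
      have hcard : ((Finset.univ : Finset (Fin n)).erase j0).card = n - 1 := by
        simp
      have hle : ((Finset.univ : Finset (Fin n)).erase j0).card ≤
          ((Finset.univ.filter fun p : Fin n × Fin n => σ p = some false).filter
            fun p => p.1 = i').card :=
        Finset.card_le_card_of_injOn (fun j => (i', j))
          (by intro j hj
              show (i', j) ∈ _
              simp only [Finset.mem_coe, Finset.mem_filter, Finset.mem_univ, true_and]
              exact ⟨hj0 j (Finset.mem_erase.mp hj).1, trivial⟩)
          (by intro a _ b _ hab; simpa using hab)
      omega
  have hsum : ∑ i' : Fin n, ((n - 1) + (if i' = i then 1 else 0)) ≤ Z σ := by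
    rw [hfib]; exact Finset.sum_le_sum fun i' _ => hbound i'
  have hsum2 : ∑ i' : Fin n, ((n - 1) + (if i' = i then 1 else 0)) = n * (n - 1) + 1 := by
    rw [Finset.sum_add_distrib, Finset.sum_const, Finset.sum_ite_eq' Finset.univ i fun _ => 1]
    simp [mul_comm]
  have key : n ^ 2 - n = n * (n - 1) := by
    have h1 : n - 1 + 1 = n := Nat.succ_pred_eq_of_pos hn
    have h2 : n * (n - 1) + n = n * n := by
      have h3 : n * (n - 1) + n = n * ((n - 1) + 1) := by ring
      rw [h3, h1]
    rw [pow_two, ← h2, Nat.add_sub_cancel]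
  omega

lemma lower (hn : 1 ≤ n) (T : DTree (Fin n × Fin n)) (hT : ∀ x, T.eval x = tribes n x) :
    n ^ 2 - n + 1 ≤ T.zeroDepth := by
  classical
  set σ0 : St n := fun _ => none with hσ0
  have hinv0 : Inv σ0 := by
    refine ⟨?_, ⟨⟨0, hn⟩, fun j => by simp [hσ0]⟩, ?_⟩
    · intro i j h; simp [hσ0] at h
    · intro i hall; have := hall ⟨0, hn⟩; simp [hσ0] at this
  set σf := (run T σ0).1 with hσf
  set b := (run T σ0).2 with hb
  have hinv : Inv σf := inv_run T σ0 hinv0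
  have hZ0 : Z σ0 = 0 := by simp [Z, hσ0]
  have hZ : Z σf ≤ T.zeroDepth := by
    have h := Z_run T σ0
    rw [← hσf] at h
    omega
  cases hbv : b with
  | true =>
    exfalso
    set x : Fin n × Fin n → Bool := fun p => (σf p).getD false with hx
    have hext : ∀ p c, σf p = some c → x p = c := by
      intro p c hc; simp [hx, hc]
    have hev : T.eval x = b := eval_run T σ0 x hext
    have htr : tribes n x = true := by rw [← hT x, hev, hbv]
    simp only [tribes, decide_eq_true_eq] at htr
    obtain ⟨i0, hno⟩ := hinv.exRow
    obtain ⟨j, hj⟩ := htr i0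
    apply hno j
    rcases hc : σf (i0, j) with _ | c
    · simp [hx, hc] at hj
    · cases c
      · simp [hx, hc] at hj
      · rfl
  | false =>
    set x : Fin n × Fin n → Bool := fun p => (σf p).getD true with hx
    have hext : ∀ p c, σf p = some c → x p = c := by
      intro p c hc; simp [hx, hc]
    have hev : T.eval x = b := eval_run T σ0 x hext
    have htr : tribes n x = false := by rw [← hT x, hev, hbv]
    simp only [tribes, decide_eq_false_iff_not] at htr
    push_neg at htr
    obtain ⟨i, hi⟩ := htr
    have hdead : ∀ j, σf (i, j) = some false := by
      intro j
      have := hi j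
      rcases hc : σf (i, j) with _ | c
      · simp [hx, hc] at this
      · cases c
        · rfl
        · simp [hx, hc] at this
    have hrows : ∀ i', i' ≠ i → ∃ j, ∀ j', j' ≠ j → σf (i', j') = some false := by
      intro i' hi'
      obtain ⟨j, hj⟩ := hinv.deadRow i hdead i' hi'
      exact ⟨j, hinv.rowTrue i' j hj⟩
    calc n ^ 2 - n + 1 ≤ Z σf := Z_lb hn σf i hdead hrows
      _ ≤ T.zeroDepth := hZ

/-! ### Upper bound construction -/

def rowT (i : Fin n) (next : DTree (Fin n × Fin n)) : List (Fin n) → DTree (Fin n × Fin n)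
  | [] => .leaf false
  | j :: js => .node (i, j) (rowT i next js) next

def fullT (n : ℕ) : List (Fin n) → DTree (Fin n × Fin n)
  | [] => .leaf true
  | i :: is => rowT i (fullT n is) (List.finRange n)

lemma eval_rowT (i : Fin n) (next : DTree (Fin n × Fin n)) (js : List (Fin n))
    (x : Fin n × Fin n → Bool) :
    (rowT i next js).eval x = if ∃ j ∈ js, x (i, j) = true then next.eval x else false := by
  induction js with
  | nil => simp [rowT, DTree.eval]
  | cons j js ih =>
    simp only [rowT, DTree.eval]
    cases hj : x (i, j) with
    | true => simp [hj]
    | false => simp [hj, ih]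

lemma eval_fullT (is : List (Fin n)) (x : Fin n × Fin n → Bool) :
    (fullT n is).eval x = decide (∀ i ∈ is, ∃ j, x (i, j) = true) := by
  induction is with
  | nil => simp [fullT, DTree.eval]
  | cons i is ih =>
    rw [fullT, eval_rowT, ih]
    by_cases hex : ∃ j, x (i, j) = true
    · simp [hex, List.mem_finRange]
    · simp [hex, List.mem_finRange]

lemma zd_rowT (i : Fin n) (next : DTree (Fin n × Fin n)) :
    ∀ js : List (Fin n), js ≠ [] →
      (rowT i next js).zeroDepth = js.length - 1 + max 1 next.zeroDepth := by
  intro js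
  induction js with
  | nil => intro h; exact absurd rfl h
  | cons j js ih =>
    intro _
    cases js with
    | nil => simp [rowT, DTree.zeroDepth]
    | cons j' js' =>
      have h := ih (by simp)
      simp only [rowT, DTree.zeroDepth] at h ⊢
      rw [h]
      simp only [List.length_cons]
      omega

lemma zd_fullT (hn : 1 ≤ n) (is : List (Fin n)) :
    (fullT n is).zeroDepth ≤ (n - 1) * is.length + 1 := by
  induction is with
  | nil => simp [fullT, DTree.zeroDepth]
  | cons i is ih =>
    have hlen : (List.finRange n).length = n := List.length_finRange
    have hne : List.finRange n ≠ [] := by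
      intro h; rw [h] at hlen; simp at hlen; omega
    rw [fullT, zd_rowT i _ _ hne]
    simp only [List.length_finRange, List.length_cons]
    have : max 1 (fullT n is).zeroDepth ≤ (n - 1) * is.length + 1 := by
      have h1 : 1 ≤ (n - 1) * is.length + 1 := by omega
      exact max_le h1 ih
    calc n - 1 + max 1 (fullT n is).zeroDepth ≤ n - 1 + ((n - 1) * is.length + 1) := by omega
      _ = (n - 1) * (is.length + 1) + 1 := by ring
      _ ≤ _ := le_refl _

lemma upper (hn : 1 ≤ n) :
    ∃ T : DTree (Fin n × Fin n), (∀ x, T.eval x = tribes n x) ∧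
      T.zeroDepth ≤ n ^ 2 - n + 1 := by
  refine ⟨fullT n (List.finRange n), ?_, ?_⟩
  · intro x
    rw [eval_fullT]
    simp [tribes, List.mem_finRange]
  · have := zd_fullT hn (List.finRange n)
    rw [List.length_finRange] at this
    have key : n ^ 2 - n = (n - 1) * n := by
      have h1 : n - 1 + 1 = n := Nat.succ_pred_eq_of_pos hn
      have h2 : (n - 1) * n + n = n * n := by
        have h3 : (n - 1) * n + n = ((n - 1) + 1) * n := by ring
        rw [h3, h1]
      rw [pow_two, ← h2, Nat.add_sub_cancel]
    omega

end Stmt13Aux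

/-- the 0-query complexity of `TRIBES_n` is exactly `n² - n + 1`: some decision
tree computing it has 0-depth `n² - n + 1`, and every decision tree computing it has
0-depth at least `n² - n + 1`. -/


theorem stmt13 (n : ℕ) (hn : 1 ≤ n) :
    IsLeast {d | ∃ T : DTree (Fin n × Fin n),
      (∀ x, T.eval x = tribes n x) ∧ T.zeroDepth = d} (n ^ 2 - n + 1) := by
  constructor
  · obtain ⟨T, hT, hzd⟩ := Stmt13Aux.upper hn
    exact ⟨T, hT, le_antisymm hzd (Stmt13Aux.lower hn T hT)⟩
  · rintro d ⟨T, hT, rfl⟩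
    exact Stmt13Aux.lower hn T hT
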